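/- Let i : 𝕊 → Set be the inclusion of the category of finite sets and surjections into the category of sets. The essential image of the left Kan extension functor Lan_i : PSh 𝕊 → [Set, Set] consists exactly of the finitary, preimage-preserving endofunctors of Set, i.e. those endofunctors that preserve filtered colimits and preserve preimages (pullbacks in which one leg is a monomorphism). -/

import Mathlib

open CategoryTheory Limits

namespace RelevantFunctors

/-- The category `𝕊` of finite sets and surjections, presented skeletally:
objects are natural numbers `n` (standing for `Fin n`), morphisms are surjective
functions. -/
structure SObj where
  n : ℕ

instance : Category SObj where
  Hom m n := {f : Fin m.n → Fin n.n // Function.Surjective f}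
  id m := ⟨id, Function.surjective_id⟩
  comp f g := ⟨g.1 ∘ f.1, g.2.comp f.2⟩
  id_comp f := Subtype.ext rfl
  comp_id f := Subtype.ext rfl
  assoc f g h := Subtype.ext rfl

/-- The inclusion `i : 𝕊 → Set` of the category of finite sets and surjections into
the category of sets. -/
def inclS : SObj ⥤ Type where
  obj m := Fin m.n
  map f := TypeCat.ofHom f.1
  map_id := fun _ => rfl
  map_comp := fun _ _ => rfl

/-- An endofunctor of `Set` *preserves preimages* if it sends every pullback square
in which one of the two legs being pulled back is a monomorphism to a pullback
square. -/
def PreservesPreimages (G : Type ⥤ Type) : Prop :=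
  ∀ {P X Y Z : Type} (fst : P ⟶ X) (snd : P ⟶ Y) (f : X ⟶ Z) (g : Y ⟶ Z),
    Mono g → IsPullback fst snd f g →
    IsPullback (G.map fst) (G.map snd) (G.map f) (G.map g)

/-! ### Generic pullback lemmas in `Type` -/

lemma isPullback_of_types {P X Y Z : Type} (fst : P ⟶ X) (snd : P ⟶ Y) (f : X ⟶ Z) (g : Y ⟶ Z)
    (comm : ∀ p, f (fst p) = g (snd p)) (hg : Function.Injective g)
    (hfst : Function.Injective fst)
    (hsurj : ∀ a b, f a = g b → ∃ p, fst p = a) :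
    IsPullback fst snd f g := by
  have w : fst ≫ f = snd ≫ g := ConcreteCategory.hom_ext _ _ comm
  refine IsPullback.of_isLimit (PullbackCone.IsLimit.mk w
    (fun s => TypeCat.ofHom fun c => (hsurj (s.fst c) (s.snd c) (types_congr_hom s.condition c)).choose) ?_ ?_ ?_)
  · intro s; refine ConcreteCategory.hom_ext _ _ fun c => ?_
    exact (hsurj (s.fst c) (s.snd c) (types_congr_hom s.condition c)).choose_spec
  · intro s; refine ConcreteCategory.hom_ext _ _ fun c => ?_
    apply hg
    have h1 : fst ((hsurj (s.fst c) (s.snd c) (types_congr_hom s.condition c)).choose) = s.fst c :=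
      (hsurj (s.fst c) (s.snd c) (types_congr_hom s.condition c)).choose_spec
    calc g (snd ((hsurj (s.fst c) (s.snd c) (types_congr_hom s.condition c)).choose))
        = f (fst ((hsurj (s.fst c) (s.snd c) (types_congr_hom s.condition c)).choose)) := (comm _).symm
      _ = f (s.fst c) := by rw [h1]
      _ = g (s.snd c) := types_congr_hom s.condition c
  · intro s m h1 _; refine ConcreteCategory.hom_ext _ _ fun c => ?_
    apply hfst
    have h3 : fst (m c) = s.fst c := types_congr_hom h1 c
    rw [h3]
    exact ((hsurj (s.fst c) (s.snd c) (types_congr_hom s.condition c)).choose_spec).symm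

lemma exists_of_isPullback {P X Y Z : Type} {fst : P ⟶ X} {snd : P ⟶ Y} {f : X ⟶ Z} {g : Y ⟶ Z}
    (h : IsPullback fst snd f g) (a : X) (b : Y) (hab : f a = g b) :
    ∃ p, fst p = a ∧ snd p = b := by
  let l := h.lift (TypeCat.ofHom fun _ : PUnit => a) (TypeCat.ofHom fun _ => b) (ConcreteCategory.hom_ext _ _ fun _ => hab)
  exact ⟨l PUnit.unit,
    types_congr_hom (h.lift_fst (TypeCat.ofHom fun _ : PUnit => a) (TypeCat.ofHom fun _ => b) (ConcreteCategory.hom_ext _ _ fun _ => hab)) PUnit.unit,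
    types_congr_hom (h.lift_snd (TypeCat.ofHom fun _ : PUnit => a) (TypeCat.ofHom fun _ => b) (ConcreteCategory.hom_ext _ _ fun _ => hab)) PUnit.unit⟩

lemma injective_fst_of_isPullback {P X Y Z : Type} {fst : P ⟶ X} {snd : P ⟶ Y} {f : X ⟶ Z}
    {g : Y ⟶ Z} (h : IsPullback fst snd f g) (hg : Function.Injective g) :
    Function.Injective fst := by
  intro p q hpq
  have hw : ∀ r, f (fst r) = g (snd r) := fun r => types_congr_hom h.w r
  have hsnd : snd p = snd q := hg (by rw [← hw, ← hw, hpq])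
  have := h.hom_ext (k := TypeCat.ofHom fun _ : PUnit => p) (l := TypeCat.ofHom fun _ : PUnit => q)
    (ConcreteCategory.hom_ext _ _ fun _ => hpq) (ConcreteCategory.hom_ext _ _ fun _ => hsnd)
  exact types_congr_hom this PUnit.unit

/-! ### The concrete model of the left Kan extension -/

structure Elt (H : SObj ⥤ Type) (X : Type) where
  n : ℕ
  x : Fin n → X
  t : H.obj ⟨n⟩

def rel (H : SObj ⥤ Type) (X : Type) : Elt H X → Elt H X → Prop := fun a b =>
  ∃ p : (⟨a.n⟩ : SObj) ⟶ ⟨b.n⟩, b.x ∘ p.1 = a.x ∧ H.map p a.t = b.t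

def CH (H : SObj ⥤ Type) : Type ⥤ Type where
  obj X := Quot (rel H X)
  map {X Y} f := TypeCat.ofHom (Quot.map (fun (a : Elt H X) => (⟨a.n, f ∘ a.x, a.t⟩ : Elt H Y))
    (by rintro ⟨n, x, t⟩ ⟨m, y, s⟩ ⟨p, h1, h2⟩
        refine ⟨p, ?_, h2⟩
        show (f ∘ y) ∘ p.1 = f ∘ x
        rw [Function.comp_assoc, h1]))
  map_id X := by
    refine ConcreteCategory.hom_ext _ _ fun q => ?_
    induction q using Quot.ind with
    | _ a => rfl
  map_comp f g := by
    refine ConcreteCategory.hom_ext _ _ fun q => ?_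
    induction q using Quot.ind with
    | _ a => rfl

lemma CH_map_mk {H : SObj ⥤ Type} {X Y : Type} (f : X ⟶ Y) (a : Elt H X) :
    (CH H).map f (Quot.mk _ a) = Quot.mk _ (⟨a.n, f ∘ a.x, a.t⟩ : Elt H Y) := rfl

lemma exists_injective_factorization {X : Type} {n : ℕ} (x : Fin n → X) :
    ∃ (k : ℕ) (p : Fin n → Fin k) (z : Fin k → X),
      Function.Surjective p ∧ Function.Injective z ∧ z ∘ p = x := by
  obtain ⟨k, ⟨e⟩⟩ := Finite.exists_equiv_fin (Set.range x)
  refine ⟨k, e ∘ Set.rangeFactorization x, Subtype.val ∘ e.symm,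
    e.surjective.comp Set.rangeFactorization_surjective,
    Subtype.val_injective.comp e.symm.injective, ?_⟩
  funext i
  simp [Set.rangeFactorization]

def rel' (H : SObj ⥤ Type) (X : Type) : Elt H X → Elt H X → Prop := fun a b =>
  ∃ (k : ℕ) (z : Fin k → X) (p : (⟨a.n⟩ : SObj) ⟶ ⟨k⟩) (q : (⟨b.n⟩ : SObj) ⟶ ⟨k⟩),
    Function.Injective z ∧ z ∘ p.1 = a.x ∧ z ∘ q.1 = b.x ∧ H.map p a.t = H.map q b.t

lemma zigzag {X : Type} {k k' m : ℕ} {z : Fin k → X} {z' : Fin k' → X}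
    {q : Fin m → Fin k} {q' : Fin m → Fin k'}
    (hz : Function.Injective z) (hz' : Function.Injective z')
    (hq : Function.Surjective q) (hq' : Function.Surjective q')
    (heq : z ∘ q = z' ∘ q') :
    ∃ σ : Fin k' → Fin k, Function.Bijective σ ∧ z ∘ σ = z' ∧ σ ∘ q' = q := by
  have hrange : Set.range z = Set.range z' := by
    rw [← hq.range_comp z, ← hq'.range_comp z', heq]
  have hmem : ∀ i', ∃ j, z j = z' i' := by
    intro i'
    have : z' i' ∈ Set.range z := by rw [hrange]; exact ⟨i', rfl⟩
    exact this
  choose σ hσ using hmem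
  have hzσ : z ∘ σ = z' := funext hσ
  have hinj : Function.Injective σ := by
    intro a b hab
    apply hz'
    rw [← hσ a, ← hσ b, hab]
  have hsurje : Function.Surjective σ := by
    intro j
    have : z j ∈ Set.range z' := by rw [← hrange]; exact ⟨j, rfl⟩
    obtain ⟨i', hi'⟩ := this
    exact ⟨i', hz (by rw [hσ i', hi'])⟩
  refine ⟨σ, ⟨hinj, hsurje⟩, hzσ, ?_⟩
  funext i
  apply hz
  rw [Function.comp_apply, hσ (q' i)]
  exact (congr_fun heq i).symm

lemma rel'_of_eqvGen {H : SObj ⥤ Type} {X : Type} {a b : Elt H X}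
    (h : Relation.EqvGen (rel H X) a b) : rel' H X a b := by
  induction h with
  | rel a b hab =>
    obtain ⟨p, h1, h2⟩ := hab
    obtain ⟨k, p₂, z, hp₂, hz, hzp₂⟩ := exists_injective_factorization b.x
    refine ⟨k, z, p ≫ ⟨p₂, hp₂⟩, ⟨p₂, hp₂⟩, hz, ?_, hzp₂, ?_⟩
    · show z ∘ (p₂ ∘ p.1) = a.x
      rw [← Function.comp_assoc, hzp₂, h1]
    · rw [Functor.map_comp, types_comp_apply, h2]
  | refl a =>
    obtain ⟨k, p, z, hp, hz, hzp⟩ := exists_injective_factorization a.x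
    exact ⟨k, z, ⟨p, hp⟩, ⟨p, hp⟩, hz, hzp, hzp, rfl⟩
  | symm a b _ ih =>
    obtain ⟨k, z, p, q, hz, hzp, hzq, ht⟩ := ih
    exact ⟨k, z, q, p, hz, hzq, hzp, ht.symm⟩
  | trans a b c _ _ ih1 ih2 =>
    obtain ⟨k, z, p, q, hz, hzp, hzq, ht⟩ := ih1
    obtain ⟨k', z', p', q', hz', hzp', hzq', ht'⟩ := ih2
    obtain ⟨σ, hbij, hzσ, hσ⟩ := zigzag hz hz' q.2 p'.2 (by rw [hzq, hzp'])
    have hpq : p' ≫ (⟨σ, hbij.surjective⟩ : (⟨k'⟩ : SObj) ⟶ ⟨k⟩) = q := Subtype.ext hσ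
    refine ⟨k, z, p, q' ≫ ⟨σ, hbij.surjective⟩, hz, hzp, ?_, ?_⟩
    · show z ∘ (σ ∘ q'.1) = c.x
      rw [← Function.comp_assoc, hzσ, hzq']
    · calc H.map p a.t = H.map q b.t := ht
        _ = H.map (p' ≫ ⟨σ, hbij.surjective⟩) b.t := by rw [hpq]
        _ = H.map (⟨σ, hbij.surjective⟩ : (⟨k'⟩ : SObj) ⟶ ⟨k⟩) (H.map p' b.t) := by
            rw [Functor.map_comp]; rfl
        _ = H.map (⟨σ, hbij.surjective⟩ : (⟨k'⟩ : SObj) ⟶ ⟨k⟩) (H.map q' c.t) := by rw [ht']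
        _ = H.map (q' ≫ ⟨σ, hbij.surjective⟩) c.t := by rw [Functor.map_comp]; rfl

lemma exists_normal_rep {H : SObj ⥤ Type} {X : Type} (u : (CH H).obj X) :
    ∃ a : Elt H X, Function.Injective a.x ∧ u = Quot.mk _ a := by
  induction u using Quot.ind with
  | _ a =>
    obtain ⟨k, p, z, hp, hz, hzp⟩ := exists_injective_factorization a.x
    exact ⟨⟨k, z, H.map ⟨p, hp⟩ a.t⟩, hz, Quot.sound ⟨⟨p, hp⟩, hzp, rfl⟩⟩

/-- A bijective surjection in `SObj` has an inverse, so `H.map` of it is injective. -/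
lemma map_injective_of_bijective {H : SObj ⥤ Type} {n m : SObj} (q : n ⟶ m)
    (hq : Function.Bijective q.1) : Function.Injective (H.map q) := by
  intro u v huv
  let e := Equiv.ofBijective q.1 hq
  let qinv : m ⟶ n := ⟨e.symm, e.symm.surjective⟩
  have hqq : q ≫ qinv = 𝟙 n := Subtype.ext (funext fun i => e.symm_apply_apply i)
  have h1 : H.map qinv (H.map q u) = u := by
    rw [← types_comp_apply (H.map q) (H.map qinv), ← Functor.map_comp, hqq,
      FunctorToTypes.map_id_apply]
  have h2 : H.map qinv (H.map q v) = v := by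
    rw [← types_comp_apply (H.map q) (H.map qinv), ← Functor.map_comp, hqq,
      FunctorToTypes.map_id_apply]
  rw [← h1, ← h2, huv]

lemma eq_of_normal {H : SObj ⥤ Type} {X : Type} {a b : Elt H X}
    (ha : Function.Injective a.x) (hb : Function.Injective b.x)
    (h : Quot.mk (rel H X) a = Quot.mk (rel H X) b) :
    ∃ σ : (⟨a.n⟩ : SObj) ⟶ ⟨b.n⟩, Function.Bijective σ.1 ∧
      b.x ∘ σ.1 = a.x ∧ H.map σ a.t = b.t := by
  obtain ⟨k, z, p, q, hz, hzp, hzq, ht⟩ := rel'_of_eqvGen (Quot.eqvGen_exact h)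
  have hpinj : Function.Injective p.1 := by
    intro i j hij
    apply ha
    rw [← congr_fun hzp i, ← congr_fun hzp j]
    show z (p.1 i) = z (p.1 j)
    rw [hij]
  have hqinj : Function.Injective q.1 := by
    intro i j hij
    apply hb
    rw [← congr_fun hzq i, ← congr_fun hzq j]
    show z (q.1 i) = z (q.1 j)
    rw [hij]
  have hpbij : Function.Bijective p.1 := ⟨hpinj, p.2⟩
  have hqbij : Function.Bijective q.1 := ⟨hqinj, q.2⟩
  let e := Equiv.ofBijective q.1 hqbij
  let σfun : Fin a.n → Fin b.n := e.symm ∘ p.1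
  have hσbij : Function.Bijective σfun := e.symm.bijective.comp hpbij
  refine ⟨⟨σfun, hσbij.surjective⟩, hσbij, ?_, ?_⟩
  · funext i
    have h1 : q.1 (e.symm (p.1 i)) = p.1 i := e.apply_symm_apply (p.1 i)
    calc b.x (σfun i) = z (q.1 (e.symm (p.1 i))) := (congr_fun hzq _).symm
      _ = z (p.1 i) := by rw [h1]
      _ = a.x i := congr_fun hzp i
  · have hcomp : (⟨σfun, hσbij.surjective⟩ : (⟨a.n⟩ : SObj) ⟶ ⟨b.n⟩) ≫ q = p :=
      Subtype.ext (funext fun i => e.apply_symm_apply (p.1 i))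
    apply map_injective_of_bijective q hqbij
    calc H.map q (H.map (⟨σfun, hσbij.surjective⟩ : (⟨a.n⟩ : SObj) ⟶ ⟨b.n⟩) a.t)
        = H.map ((⟨σfun, hσbij.surjective⟩ : (⟨a.n⟩ : SObj) ⟶ ⟨b.n⟩) ≫ q) a.t := by
          rw [Functor.map_comp]; rfl
      _ = H.map p a.t := by rw [hcomp]
      _ = H.map q b.t := ht

lemma CH_map_injective {H : SObj ⥤ Type} {X Y : Type} {φ : X → Y}
    (hφ : Function.Injective φ) : Function.Injective ((CH H).map (TypeCat.ofHom φ)) := by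
  intro u v huv
  obtain ⟨a, ha, rfl⟩ := exists_normal_rep u
  obtain ⟨b, hb, rfl⟩ := exists_normal_rep v
  rw [CH_map_mk, CH_map_mk] at huv
  obtain ⟨σ, hσbij, hσx, hσt⟩ := eq_of_normal (X := Y)
    (a := ⟨a.n, φ ∘ a.x, a.t⟩) (b := ⟨b.n, φ ∘ b.x, b.t⟩)
    (hφ.comp ha) (hφ.comp hb) huv
  apply Quot.sound
  refine ⟨σ, ?_, hσt⟩
  funext i
  apply hφ
  exact congr_fun hσx i

theorem CH_preservesPreimages (H : SObj ⥤ Type) : PreservesPreimages (CH H) := by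
  intro P X Y Z fst snd f g hg hpb
  have hginj : Function.Injective g := (CategoryTheory.mono_iff_injective g).mp hg
  have hfstinj : Function.Injective fst := injective_fst_of_isPullback hpb hginj
  refine isPullback_of_types _ _ _ _ ?_ (CH_map_injective hginj) (CH_map_injective hfstinj) ?_
  · intro u
    induction u using Quot.ind with
    | _ a =>
      show Quot.mk _ (⟨a.n, f ∘ (fst ∘ a.x), a.t⟩ : Elt H Z)
        = Quot.mk _ (⟨a.n, g ∘ (snd ∘ a.x), a.t⟩ : Elt H Z)
      have : f ∘ (fst ∘ a.x) = g ∘ (snd ∘ a.x) := by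
        funext i
        exact types_congr_hom hpb.w (a.x i)
      rw [this]
  · intro u v huv
    obtain ⟨a, ha, rfl⟩ := exists_normal_rep u
    obtain ⟨b, hb, rfl⟩ := exists_normal_rep v
    rw [CH_map_mk, CH_map_mk] at huv
    obtain ⟨k, p, z, hp, hz, hzp⟩ := exists_injective_factorization (f ∘ a.x)
    have h1 : Quot.mk (rel H Z) ⟨a.n, f ∘ a.x, a.t⟩
        = Quot.mk (rel H Z) ⟨k, z, H.map ⟨p, hp⟩ a.t⟩ :=
      Quot.sound ⟨⟨p, hp⟩, hzp, rfl⟩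
    have h2 : Quot.mk (rel H Z) ⟨k, z, H.map ⟨p, hp⟩ a.t⟩
        = Quot.mk (rel H Z) ⟨b.n, g ∘ b.x, b.t⟩ := h1.symm.trans huv
    obtain ⟨σ, hσbij, hσx, hσt⟩ := eq_of_normal (a := ⟨k, z, H.map ⟨p, hp⟩ a.t⟩)
      (b := ⟨b.n, g ∘ b.x, b.t⟩) hz (hginj.comp hb) h2
    have key : ∀ i : Fin a.n, f (a.x i) = g (b.x (σ.1 (p i))) := by
      intro i
      calc f (a.x i) = z (p i) := (congr_fun hzp i).symm
        _ = g (b.x (σ.1 (p i))) := (congr_fun hσx (p i)).symm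
    let w : Fin a.n → P := fun i => (exists_of_isPullback hpb (a.x i) (b.x (σ.1 (p i))) (key i)).choose
    have hw : ∀ i, fst (w i) = a.x i :=
      fun i => (exists_of_isPullback hpb (a.x i) (b.x (σ.1 (p i))) (key i)).choose_spec.1
    refine ⟨Quot.mk _ (⟨a.n, w, a.t⟩ : Elt H P), ?_⟩
    rw [CH_map_mk]
    have : fst ∘ w = a.x := funext hw
    rw [this]

/-! ### `CH H` preserves filtered colimits -/

section Filtered

variable {J : Type} [SmallCategory J] [IsFiltered J] {K : J ⥤ Type} {c : Cocone K}

lemma lift_fin (hc : IsColimit c) : ∀ (n : ℕ) (x : Fin n → c.pt),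
    ∃ (j : J) (x' : Fin n → K.obj j), ∀ i, c.ι.app j (x' i) = x i := by
  intro n
  induction n with
  | zero =>
    intro x
    obtain ⟨j⟩ := IsFiltered.nonempty (C := J)
    exact ⟨j, Fin.elim0, fun i => i.elim0⟩
  | succ n ih =>
    intro x
    obtain ⟨j₁, x₁, h₁⟩ := ih (x ∘ Fin.succ)
    obtain ⟨j₂, y, hy⟩ := Types.jointly_surjective K hc (x 0)
    refine ⟨IsFiltered.max j₁ j₂,
      Fin.cases (K.map (IsFiltered.rightToMax j₁ j₂) y)
        (fun i => K.map (IsFiltered.leftToMax j₁ j₂) (x₁ i)), ?_⟩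
    intro i
    induction i using Fin.cases with
    | zero =>
      show c.ι.app (IsFiltered.max j₁ j₂) (K.map (IsFiltered.rightToMax j₁ j₂) y) = x 0
      rw [← hy]
      exact types_congr_hom (c.w (IsFiltered.rightToMax j₁ j₂)) y
    | succ i =>
      show c.ι.app (IsFiltered.max j₁ j₂) (K.map (IsFiltered.leftToMax j₁ j₂) (x₁ i)) = x i.succ
      have := types_congr_hom (c.w (IsFiltered.leftToMax j₁ j₂)) (x₁ i)
      rw [types_comp_apply] at this
      rw [this]
      exact h₁ i

lemma equalize_fin (hc : IsColimit c) : ∀ (n : ℕ) (j : J) (a b : Fin n → K.obj j),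
    (∀ i, c.ι.app j (a i) = c.ι.app j (b i)) →
    ∃ (k : J) (f : j ⟶ k), ∀ i, K.map f (a i) = K.map f (b i) := by
  intro n
  induction n with
  | zero => exact fun j a b _ => ⟨j, 𝟙 j, fun i => i.elim0⟩
  | succ n ih =>
    intro j a b h
    obtain ⟨k, f, hf⟩ := ih j (a ∘ Fin.succ) (b ∘ Fin.succ) (fun i => h i.succ)
    obtain ⟨k', f', g', h0⟩ := (Types.FilteredColimit.isColimit_eq_iff K hc).mp (h 0)
    let f'' : j ⟶ IsFiltered.coeq f' g' := f' ≫ IsFiltered.coeqHom f' g'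
    have h0' : K.map f'' (a 0) = K.map f'' (b 0) := by
      calc K.map f'' (a 0)
          = K.map (IsFiltered.coeqHom f' g') (K.map f' (a 0)) :=
            FunctorToTypes.map_comp_apply K f' (IsFiltered.coeqHom f' g') (a 0)
        _ = K.map (IsFiltered.coeqHom f' g') (K.map g' (b 0)) := by rw [h0]
        _ = K.map (g' ≫ IsFiltered.coeqHom f' g') (b 0) :=
            (FunctorToTypes.map_comp_apply K g' (IsFiltered.coeqHom f' g') (b 0)).symm
        _ = K.map f'' (b 0) := by rw [← IsFiltered.coeq_condition f' g']
    let l := IsFiltered.max k (IsFiltered.coeq f' g')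
    let t₁ : j ⟶ l := f ≫ IsFiltered.leftToMax _ _
    let t₂ : j ⟶ l := f'' ≫ IsFiltered.rightToMax _ _
    let w : l ⟶ IsFiltered.coeq t₁ t₂ := IsFiltered.coeqHom t₁ t₂
    refine ⟨IsFiltered.coeq t₁ t₂, t₁ ≫ w, ?_⟩
    intro i
    induction i using Fin.cases with
    | zero =>
      have ht : t₁ ≫ w = f'' ≫ (IsFiltered.rightToMax _ _ ≫ w) := by
        rw [← Category.assoc]
        exact IsFiltered.coeq_condition t₁ t₂
      rw [ht]
      simp only [FunctorToTypes.map_comp_apply]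
      rw [h0']
    | succ i =>
      have ht : t₁ ≫ w = f ≫ (IsFiltered.leftToMax _ _ ≫ w) := by
        rw [← Category.assoc]
      rw [ht]
      simp only [FunctorToTypes.map_comp_apply]
      have := hf i
      rw [Function.comp_apply, Function.comp_apply] at this
      rw [this]

end Filtered

theorem CH_preservesFiltered (H : SObj ⥤ Type) : PreservesFilteredColimits (CH H) := by
  constructor
  intro J _ _
  constructor
  intro K
  constructor
  intro c hc
  constructor
  apply Types.FilteredColimit.isColimitOf
  · -- joint surjectivity
    intro u
    induction u using Quot.ind with
    | _ a =>
      obtain ⟨j, x', hx'⟩ := lift_fin hc a.n a.x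
      refine ⟨j, Quot.mk _ (⟨a.n, x', a.t⟩ : Elt H (K.obj j)), ?_⟩
      show Quot.mk _ a = Quot.mk _ (⟨a.n, c.ι.app j ∘ x', a.t⟩ : Elt H c.pt)
      have hfun : c.ι.app j ∘ x' = a.x := funext hx'
      rw [hfun]
  · intro j₁ j₂ y₁ y₂ h
    induction y₁ using Quot.ind with
    | _ a =>
    induction y₂ using Quot.ind with
    | _ b =>
    have h2 : Quot.mk (rel H c.pt) ⟨a.n, c.ι.app j₁ ∘ a.x, a.t⟩
        = Quot.mk (rel H c.pt) ⟨b.n, c.ι.app j₂ ∘ b.x, b.t⟩ := h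
    obtain ⟨k, z, p, q, hz, hzp, hzq, ht⟩ := rel'_of_eqvGen (Quot.eqvGen_exact h2)
    obtain ⟨j₀, z₁, hz₁⟩ := lift_fin hc k z
    -- move everything to a common stage j₃
    let j₃ := IsFiltered.max j₁ (IsFiltered.max j₂ j₀)
    let u₁ : j₁ ⟶ j₃ := IsFiltered.leftToMax _ _
    let u₂ : j₂ ⟶ j₃ := IsFiltered.leftToMax j₂ j₀ ≫ IsFiltered.rightToMax _ _
    let u₀ : j₀ ⟶ j₃ := IsFiltered.rightToMax j₂ j₀ ≫ IsFiltered.rightToMax _ _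
    let a' : Fin a.n → K.obj j₃ := fun i => K.map u₁ (a.x i)
    let z' : Fin k → K.obj j₃ := fun i => K.map u₀ (z₁ i)
    let b' : Fin b.n → K.obj j₃ := fun i => K.map u₂ (b.x i)
    have haeq : ∀ i, c.ι.app j₃ (a' i) = c.ι.app j₃ (z' (p.1 i)) := by
      intro i
      calc c.ι.app j₃ (a' i) = c.ι.app j₁ (a.x i) := types_congr_hom (c.w u₁) (a.x i)
        _ = z (p.1 i) := (congr_fun hzp i).symm
        _ = c.ι.app j₀ (z₁ (p.1 i)) := (hz₁ (p.1 i)).symm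
        _ = c.ι.app j₃ (z' (p.1 i)) := (types_congr_hom (c.w u₀) (z₁ (p.1 i))).symm
    obtain ⟨k₄, f₄, hf₄⟩ := equalize_fin hc a.n j₃ a' (fun i => z' (p.1 i)) haeq
    have hbeq : ∀ i, c.ι.app k₄ (K.map f₄ (b' i)) = c.ι.app k₄ (K.map f₄ (z' (q.1 i))) := by
      intro i
      calc c.ι.app k₄ (K.map f₄ (b' i)) = c.ι.app j₃ (b' i) := types_congr_hom (c.w f₄) (b' i)
        _ = c.ι.app j₂ (b.x i) := types_congr_hom (c.w u₂) (b.x i)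
        _ = z (q.1 i) := (congr_fun hzq i).symm
        _ = c.ι.app j₀ (z₁ (q.1 i)) := (hz₁ (q.1 i)).symm
        _ = c.ι.app j₃ (z' (q.1 i)) := (types_congr_hom (c.w u₀) (z₁ (q.1 i))).symm
        _ = c.ι.app k₄ (K.map f₄ (z' (q.1 i))) := (types_congr_hom (c.w f₄) (z' (q.1 i))).symm
    obtain ⟨k₅, f₅, hf₅⟩ := equalize_fin hc b.n k₄ (fun i => K.map f₄ (b' i))
      (fun i => K.map f₄ (z' (q.1 i))) hbeq
    let Z₅ : Fin k → K.obj k₅ := fun i => K.map f₅ (K.map f₄ (z' i))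
    refine ⟨k₅, u₁ ≫ f₄ ≫ f₅, u₂ ≫ f₄ ≫ f₅, ?_⟩
    have claim1 : K.map (u₁ ≫ f₄ ≫ f₅) ∘ a.x = Z₅ ∘ p.1 := by
      funext i
      show K.map (u₁ ≫ f₄ ≫ f₅) (a.x i) = Z₅ (p.1 i)
      rw [FunctorToTypes.map_comp_apply, FunctorToTypes.map_comp_apply]
      show K.map f₅ (K.map f₄ (a' i)) = Z₅ (p.1 i)
      rw [hf₄ i]
    have claim2 : K.map (u₂ ≫ f₄ ≫ f₅) ∘ b.x = Z₅ ∘ q.1 := by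
      funext i
      show K.map (u₂ ≫ f₄ ≫ f₅) (b.x i) = Z₅ (q.1 i)
      rw [FunctorToTypes.map_comp_apply, FunctorToTypes.map_comp_apply]
      exact hf₅ i
    show Quot.mk _ (⟨a.n, K.map (u₁ ≫ f₄ ≫ f₅) ∘ a.x, a.t⟩ : Elt H (K.obj k₅))
      = Quot.mk _ (⟨b.n, K.map (u₂ ≫ f₄ ≫ f₅) ∘ b.x, b.t⟩ : Elt H (K.obj k₅))
    rw [claim1, claim2]
    have e1 : Quot.mk (rel H (K.obj k₅)) ⟨a.n, Z₅ ∘ p.1, a.t⟩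
        = Quot.mk (rel H (K.obj k₅)) ⟨k, Z₅, H.map p a.t⟩ :=
      Quot.sound ⟨p, rfl, rfl⟩
    have e2 : Quot.mk (rel H (K.obj k₅)) ⟨b.n, Z₅ ∘ q.1, b.t⟩
        = Quot.mk (rel H (K.obj k₅)) ⟨k, Z₅, H.map q b.t⟩ :=
      Quot.sound ⟨q, rfl, rfl⟩
    rw [e1, e2, ht]

/-! ### `CH H` is the left Kan extension of `H` along `inclS` -/

def eta (H : SObj ⥤ Type) : H ⟶ inclS ⋙ CH H where
  app n := TypeCat.ofHom fun t => Quot.mk _ (⟨n.n, id, t⟩ : Elt H (Fin n.n))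
  naturality n m p := by
    refine ConcreteCategory.hom_ext _ _ fun t => ?_
    exact (Quot.sound ⟨p, funext fun _ => rfl, rfl⟩).symm

def coconeAtIsColimit (H : SObj ⥤ Type) (X : Type) :
    (Functor.LeftExtension.mk (CH H) (eta H)).IsPointwiseLeftKanExtensionAt X := by
  refine
    { desc := fun s => TypeCat.ofHom (Quot.lift
        (fun (a : Elt H X) => s.ι.app (CostructuredArrow.mk (Y := (⟨a.n⟩ : SObj)) (TypeCat.ofHom a.x : inclS.obj ⟨a.n⟩ ⟶ X)) a.t)
        ?_)
      fac := ?_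
      uniq := ?_ }
  · rintro a b ⟨p, h1, h2⟩
    let φ : CostructuredArrow.mk (S := inclS) (Y := (⟨a.n⟩ : SObj)) (TypeCat.ofHom a.x : inclS.obj ⟨a.n⟩ ⟶ X) ⟶
        CostructuredArrow.mk (S := inclS) (Y := (⟨b.n⟩ : SObj)) (TypeCat.ofHom b.x : inclS.obj ⟨b.n⟩ ⟶ X) :=
      CostructuredArrow.homMk (g := p) (ConcreteCategory.hom_ext _ _ fun i => congr_fun h1 i)
    have := types_congr_hom (s.w φ) a.t
    replace this : s.ι.app (CostructuredArrow.mk (Y := (⟨b.n⟩ : SObj)) (TypeCat.ofHom b.x : inclS.obj ⟨b.n⟩ ⟶ X)) (H.map p a.t)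
        = s.ι.app (CostructuredArrow.mk (Y := (⟨a.n⟩ : SObj)) (TypeCat.ofHom a.x : inclS.obj ⟨a.n⟩ ⟶ X)) a.t := this
    show s.ι.app (CostructuredArrow.mk (Y := (⟨a.n⟩ : SObj)) (TypeCat.ofHom a.x : inclS.obj ⟨a.n⟩ ⟶ X)) a.t
      = s.ι.app (CostructuredArrow.mk (Y := (⟨b.n⟩ : SObj)) (TypeCat.ofHom b.x : inclS.obj ⟨b.n⟩ ⟶ X)) b.t
    rw [← this]
    exact congrArg (s.ι.app (CostructuredArrow.mk (Y := (⟨b.n⟩ : SObj))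
      (TypeCat.ofHom b.x : inclS.obj ⟨b.n⟩ ⟶ X))) h2
  · intro s j
    rw [CostructuredArrow.eq_mk j]
    rfl
  · intro s m hm
    refine ConcreteCategory.hom_ext _ _ fun u => ?_
    induction u using Quot.ind with
    | _ a =>
      exact types_congr_hom (hm (CostructuredArrow.mk (Y := (⟨a.n⟩ : SObj)) (TypeCat.ofHom a.x : inclS.obj ⟨a.n⟩ ⟶ X))) a.t

theorem CH_isLKE (H : SObj ⥤ Type) : (CH H).IsLeftKanExtension (eta H) :=
  Functor.LeftExtension.IsPointwiseLeftKanExtension.isLeftKanExtension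
    (fun X => coconeAtIsColimit H X)

noncomputable def lanIso (H : SObj ⥤ Type) : (Functor.lan inclS).obj H ≅ CH H :=
  haveI := CH_isLKE H
  Functor.leftKanExtensionUnique _ ((Functor.lanUnit inclS).app H) _ (eta H)

/-! ### Construction of the presheaf from a finitary preimage-preserving functor -/

section Backward

variable (G : Type ⥤ Type)

def FullSupp {n : ℕ} (t : G.obj (Fin n)) : Prop :=
  ∀ S : Set (Fin n), (∃ s : G.obj S, G.map (TypeCat.ofHom (Subtype.val : S → Fin n)) s = t) → S = Set.univ

lemma fullSupp_map (hpre : PreservesPreimages G) {n m : SObj} (p : n ⟶ m)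
    {t : G.obj (Fin n.n)} (ht : FullSupp G t) : FullSupp G (G.map (TypeCat.ofHom p.1) t) := by
  intro S hS
  obtain ⟨s, hs⟩ := hS
  have hpb : IsPullback (TypeCat.ofHom (Subtype.val : (p.1 ⁻¹' S : Set (Fin n.n)) → Fin n.n))
      (TypeCat.ofHom (S.restrictPreimage p.1)) (TypeCat.ofHom p.1) (TypeCat.ofHom (Subtype.val : S → Fin m.n)) :=
    isPullback_of_types _ _ _ _ (fun _ => rfl) Subtype.val_injective Subtype.val_injective
      (fun a b hab => ⟨⟨a, show p.1 a ∈ S by have hab' : p.1 a = b.1 := hab; rw [hab']; exact b.2⟩, rfl⟩)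
  have hGpb := hpre _ _ _ _ ((CategoryTheory.mono_iff_injective _).mpr Subtype.val_injective) hpb
  obtain ⟨w, hw1, _⟩ := exists_of_isPullback hGpb t s hs.symm
  have hsub : (p.1 ⁻¹' S : Set (Fin n.n)) = Set.univ := ht _ ⟨w, hw1⟩
  apply Set.eq_univ_of_forall
  intro b
  obtain ⟨a, rfl⟩ := p.2 b
  have : a ∈ (p.1 ⁻¹' S : Set (Fin n.n)) := by rw [hsub]; trivial
  exact this

def HG (hpre : PreservesPreimages G) : SObj ⥤ Type where
  obj n := {t : G.obj (Fin n.n) // FullSupp G t}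
  map p := TypeCat.ofHom fun t => ⟨G.map (TypeCat.ofHom p.1) t.1, fullSupp_map G hpre p t.2⟩
  map_id n := by
    refine ConcreteCategory.hom_ext _ _ fun t => ?_
    apply Subtype.ext
    exact FunctorToTypes.map_id_apply G t.1
  map_comp p q := by
    refine ConcreteCategory.hom_ext _ _ fun t => ?_
    apply Subtype.ext
    exact FunctorToTypes.map_comp_apply G (TypeCat.ofHom p.1) (TypeCat.ofHom q.1) t.1

variable (hpre : PreservesPreimages G)

def nuApp (X : Type) : (CH (HG G hpre)).obj X → G.obj X :=
  Quot.lift (fun (a : Elt (HG G hpre) X) => G.map (TypeCat.ofHom a.x) a.t.1) (by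
    rintro a b ⟨p, h1, h2⟩
    show G.map (TypeCat.ofHom a.x) a.t.1 = G.map (TypeCat.ofHom b.x) b.t.1
    have hb : G.map (TypeCat.ofHom p.1) a.t.1 = b.t.1 := congrArg Subtype.val h2
    calc G.map (TypeCat.ofHom a.x) a.t.1 = G.map (TypeCat.ofHom (b.x ∘ p.1)) a.t.1 := by rw [h1]
      _ = G.map (TypeCat.ofHom b.x) (G.map (TypeCat.ofHom p.1) a.t.1) := FunctorToTypes.map_comp_apply G (TypeCat.ofHom p.1) (TypeCat.ofHom b.x) a.t.1
      _ = G.map (TypeCat.ofHom b.x) b.t.1 := by rw [hb])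

lemma nuApp_mk (X : Type) (a : Elt (HG G hpre) X) :
    nuApp G hpre X (Quot.mk _ a) = G.map (TypeCat.ofHom a.x) a.t.1 := rfl

/-! #### Surjectivity -/

abbrev FinSub (X : Type) : Type := {S : Set X // S.Finite}

instance (X : Type) : IsDirected (FinSub X) (· ≤ ·) :=
  ⟨fun S T => ⟨⟨S.1 ∪ T.1, S.2.union T.2⟩,
    Set.subset_union_left, Set.subset_union_right⟩⟩

instance (X : Type) : Nonempty (FinSub X) := ⟨⟨∅, Set.finite_empty⟩⟩

def finsubDiagram (X : Type) : FinSub X ⥤ Type where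
  obj S := S.1
  map {S T} h := TypeCat.ofHom fun a => ⟨a.1, leOfHom h a.2⟩
  map_id S := rfl
  map_comp f g := rfl

def finsubCocone (X : Type) : Cocone (finsubDiagram X) where
  pt := X
  ι := { app := fun S => TypeCat.ofHom fun a => a.1, naturality := fun S T h => rfl }

noncomputable def finsubIsColimit (X : Type) : IsColimit (finsubCocone X) :=
  Types.FilteredColimit.isColimitOf _ _
    (fun x => ⟨⟨{x}, Set.finite_singleton x⟩, ⟨x, rfl⟩, rfl⟩)
    (fun S T a b h =>
      ⟨⟨S.1 ∪ T.1, S.2.union T.2⟩, homOfLE Set.subset_union_left,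
        homOfLE Set.subset_union_right, Subtype.ext h⟩)

lemma exists_finite_rep (hfil : PreservesFilteredColimits G) {X : Type} (cX : G.obj X) :
    ∃ (k : ℕ) (x : Fin k → X) (t : G.obj (Fin k)), G.map (TypeCat.ofHom x) t = cX := by
  have hcl := isColimitOfPreserves G (finsubIsColimit X)
  obtain ⟨S, d, hd⟩ := Types.jointly_surjective _ hcl cX
  haveI : Finite S.1 := S.2
  obtain ⟨k, ⟨e⟩⟩ := Finite.exists_equiv_fin S.1
  refine ⟨k, Subtype.val ∘ e.symm, G.map (TypeCat.ofHom (e : S.1 → Fin k)) d, ?_⟩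
  have h1 : G.map (TypeCat.ofHom (Subtype.val ∘ e.symm : Fin k → X)) (G.map (TypeCat.ofHom (e : S.1 → Fin k)) d)
      = G.map (TypeCat.ofHom ((Subtype.val ∘ e.symm : Fin k → X) ∘ (e : S.1 → Fin k))) d :=
    (FunctorToTypes.map_comp_apply G (TypeCat.ofHom (e : S.1 → Fin k)) (TypeCat.ofHom (Subtype.val ∘ e.symm : Fin k → X)) d).symm
  rw [h1]
  have h2 : ((Subtype.val ∘ e.symm : Fin k → X) ∘ (e : S.1 → Fin k))
      = (Subtype.val : S.1 → X) := by
    funext a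
    simp
  rw [h2]
  exact hd

lemma descend {X : Type} : ∀ (k : ℕ) (x : Fin k → X) (t : G.obj (Fin k)),
    ∃ (k' : ℕ) (x' : Fin k' → X) (t' : G.obj (Fin k')),
      FullSupp G t' ∧ G.map (TypeCat.ofHom x') t' = G.map (TypeCat.ofHom x) t := by
  intro k
  induction k using Nat.strong_induction_on with
  | _ k ih =>
    intro x t
    by_cases h : FullSupp G t
    · exact ⟨k, x, t, h, rfl⟩
    · classical
      simp only [FullSupp, not_forall] at h
      obtain ⟨S, ⟨s, hs⟩, hS⟩ := h
      let e := Fintype.equivFin S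
      have hcard : Fintype.card S < k := by
        obtain ⟨a, ha⟩ := (Set.ne_univ_iff_exists_notMem S).mp hS
        have := Fintype.card_subtype_lt (p := fun a => a ∈ S) ha
        simpa using this
      obtain ⟨k', x', t', h1, h2⟩ := ih _ hcard (x ∘ Subtype.val ∘ e.symm)
        (G.map (TypeCat.ofHom (e : S → Fin (Fintype.card S))) s)
      refine ⟨k', x', t', h1, ?_⟩
      rw [h2]
      have h3 : G.map (TypeCat.ofHom (x ∘ Subtype.val ∘ e.symm)) (G.map (TypeCat.ofHom (e : S → Fin (Fintype.card S))) s)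
          = G.map (TypeCat.ofHom ((x ∘ Subtype.val ∘ e.symm) ∘ (e : S → Fin (Fintype.card S)))) s :=
        (FunctorToTypes.map_comp_apply G (TypeCat.ofHom (e : S → Fin (Fintype.card S))) (TypeCat.ofHom (x ∘ Subtype.val ∘ e.symm)) s).symm
      have h4 : ((x ∘ Subtype.val ∘ e.symm) ∘ (e : S → Fin (Fintype.card S)))
          = x ∘ (Subtype.val : S → Fin k) := by
        funext a
        simp
      have h5 : G.map (TypeCat.ofHom (x ∘ (Subtype.val : S → Fin k))) s = G.map (TypeCat.ofHom x) (G.map (TypeCat.ofHom (Subtype.val : S → Fin k)) s) :=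
        FunctorToTypes.map_comp_apply G (TypeCat.ofHom (Subtype.val : S → Fin k)) (TypeCat.ofHom x) s
      rw [h3, h4, h5, hs]

lemma nuApp_surjective (hfil : PreservesFilteredColimits G) (X : Type) :
    Function.Surjective (nuApp G hpre X) := by
  intro cX
  obtain ⟨k, x, t, ht⟩ := exists_finite_rep G hfil cX
  obtain ⟨k', x', t', hfull, heq⟩ := descend G k x t
  exact ⟨Quot.mk _ (⟨k', x', ⟨t', hfull⟩⟩ : Elt (HG G hpre) X), heq.trans ht⟩

end Backward

section BackwardInj

variable (G : Type ⥤ Type) (hpre : PreservesPreimages G)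

lemma nuApp_injective (X : Type) : Function.Injective (nuApp G hpre X) := by
  intro u v huv
  obtain ⟨a, ha, rfl⟩ := exists_normal_rep u
  obtain ⟨b, hb, rfl⟩ := exists_normal_rep v
  rw [nuApp_mk, nuApp_mk] at huv
  -- the canonical pullback of `a.x` and `b.x`
  let P : Type := {w : Fin a.n × Fin b.n // a.x w.1 = b.x w.2}
  let fstP : P → Fin a.n := fun w => w.1.1
  let sndP : P → Fin b.n := fun w => w.1.2
  have hfstinj : Function.Injective fstP := by
    rintro ⟨⟨i, j⟩, hij⟩ ⟨⟨i', j'⟩, hij'⟩ h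
    have h1 : i = i' := h
    apply Subtype.ext
    apply Prod.ext h1
    apply hb
    show b.x j = b.x j'
    rw [← hij, ← hij', h1]
  have hsndinj : Function.Injective sndP := by
    rintro ⟨⟨i, j⟩, hij⟩ ⟨⟨i', j'⟩, hij'⟩ h
    have h1 : j = j' := h
    apply Subtype.ext
    apply Prod.ext _ h1
    apply ha
    show a.x i = a.x i'
    rw [hij, hij', h1]
  have hpb : IsPullback (TypeCat.ofHom fstP) (TypeCat.ofHom sndP) (TypeCat.ofHom a.x) (TypeCat.ofHom b.x) :=
    isPullback_of_types _ _ _ _ (fun w => w.2) hb hfstinj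
      (fun i j hij => ⟨⟨(i, j), hij⟩, rfl⟩)
  have hGpb := hpre _ _ _ _ ((CategoryTheory.mono_iff_injective _).mpr hb) hpb
  obtain ⟨w, hw1, hw2⟩ := exists_of_isPullback hGpb a.t.1 b.t.1 huv
  -- `fstP` is surjective since `a.t` has full support
  have hfstsurj : Function.Surjective fstP := by
    have hS : Set.range fstP = Set.univ := by
      apply a.t.2 (Set.range fstP)
      refine ⟨G.map (TypeCat.ofHom (Set.rangeFactorization fstP)) w, ?_⟩
      have : G.map (TypeCat.ofHom (Subtype.val : Set.range fstP → Fin a.n))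
          (G.map (TypeCat.ofHom (Set.rangeFactorization fstP)) w)
          = G.map (TypeCat.ofHom (Subtype.val ∘ Set.rangeFactorization fstP)) w :=
        (FunctorToTypes.map_comp_apply G (TypeCat.ofHom (Set.rangeFactorization fstP)) (TypeCat.ofHom Subtype.val) w).symm
      rw [this]
      exact hw1
    exact Set.range_eq_univ.mp hS
  have hsndsurj : Function.Surjective sndP := by
    have hS : Set.range sndP = Set.univ := by
      apply b.t.2 (Set.range sndP)
      refine ⟨G.map (TypeCat.ofHom (Set.rangeFactorization sndP)) w, ?_⟩
      have : G.map (TypeCat.ofHom (Subtype.val : Set.range sndP → Fin b.n))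
          (G.map (TypeCat.ofHom (Set.rangeFactorization sndP)) w)
          = G.map (TypeCat.ofHom (Subtype.val ∘ Set.rangeFactorization sndP)) w :=
        (FunctorToTypes.map_comp_apply G (TypeCat.ofHom (Set.rangeFactorization sndP)) (TypeCat.ofHom Subtype.val) w).symm
      rw [this]
      exact hw2
    exact Set.range_eq_univ.mp hS
  let ef := Equiv.ofBijective fstP ⟨hfstinj, hfstsurj⟩
  let σ : Fin a.n → Fin b.n := sndP ∘ ef.symm
  have hσbij : Function.Bijective σ := Function.Bijective.comp ⟨hsndinj, hsndsurj⟩ ef.symm.bijective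
  have hx : b.x ∘ σ = a.x := by
    funext i
    show b.x (sndP (ef.symm i)) = a.x i
    have h1 : fstP (ef.symm i) = i := ef.apply_symm_apply i
    rw [← (ef.symm i).2]
    show a.x (fstP (ef.symm i)) = a.x i
    rw [h1]
  have hts : (HG G hpre).map (⟨σ, hσbij.surjective⟩ : (⟨a.n⟩ : SObj) ⟶ ⟨b.n⟩) a.t = b.t := by
    apply Subtype.ext
    show G.map (TypeCat.ofHom σ) a.t.1 = b.t.1
    have hcomp : σ ∘ fstP = sndP := by
      funext w'
      show sndP (ef.symm (fstP w')) = sndP w'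
      rw [show ef.symm (fstP w') = w' from ef.symm_apply_apply w']
    calc G.map (TypeCat.ofHom σ) a.t.1 = G.map (TypeCat.ofHom σ) (G.map (TypeCat.ofHom fstP) w) := by rw [hw1]
      _ = G.map (TypeCat.ofHom (σ ∘ fstP)) w := (FunctorToTypes.map_comp_apply G (TypeCat.ofHom fstP) (TypeCat.ofHom σ) w).symm
      _ = G.map (TypeCat.ofHom sndP) w := by rw [hcomp]
      _ = b.t.1 := hw2
  exact Quot.sound ⟨⟨σ, hσbij.surjective⟩, hx, hts⟩

noncomputable def nuIso (hfil : PreservesFilteredColimits G) : CH (HG G hpre) ≅ G :=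
  NatIso.ofComponents
    (fun X => (Equiv.ofBijective (nuApp G hpre X)
      ⟨nuApp_injective G hpre X, nuApp_surjective G hpre hfil X⟩).toIso)
    (by
      intro X Y f
      refine ConcreteCategory.hom_ext _ _ fun u => ?_
      induction u using Quot.ind with
      | _ a =>
        show nuApp G hpre Y ((CH (HG G hpre)).map f (Quot.mk _ a)) = G.map f (nuApp G hpre X (Quot.mk _ a))
        rw [CH_map_mk, nuApp_mk, nuApp_mk]
        exact FunctorToTypes.map_comp_apply G (TypeCat.ofHom a.x) f a.t.1)

end BackwardInj

/-- **Theorem (Essential image of `Lan_i` for `i : 𝕊 → Set`).**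
The essential image of the left Kan extension functor `Lan_i : PSh 𝕊 ⥤ [Set, Set]`
consists exactly of the finitary (filtered-colimit preserving), preimage-preserving
endofunctors of `Set`. -/
theorem essImage_lan_surjections (G : Type ⥤ Type) :
    (Functor.lan inclS : (SObj ⥤ Type) ⥤ (Type ⥤ Type)).essImage G ↔
      (PreservesFilteredColimits G ∧ PreservesPreimages G) := by
  constructor
  · rintro ⟨H, ⟨e⟩⟩
    have e' : CH H ≅ G := (lanIso H).symm ≪≫ e
    constructor
    · haveI := CH_preservesFiltered H
      exact ⟨fun J _ _ => preservesColimitsOfShape_of_natIso e'⟩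
    · intro P X Y Z fst snd f g hg hpb
      have h2 := CH_preservesPreimages H fst snd f g hg hpb
      exact IsPullback.of_iso h2 (e'.app P) (e'.app X) (e'.app Y) (e'.app Z)
        (e'.hom.naturality fst) (e'.hom.naturality snd) (e'.hom.naturality f)
        (e'.hom.naturality g)
  · rintro ⟨hfil, hpre⟩
    exact ⟨HG G hpre, ⟨lanIso (HG G hpre) ≪≫ nuIso G hpre hfil⟩⟩

end RelevantFunctors
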